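/- Let (M^n,g), n ≥ 3, and let ∇ be the metric connection with vectorial torsion given by a vector field V: ∇_X Y = ∇^g_X Y + ⟨X,Y⟩V − ⟨V,Y⟩X. If ∇ is flat, then the 1-form dual to V is closed, dV = 0; equivalently ⟨∇^g_X V, Y⟩ = ⟨∇^g_Y V, X⟩ for all X,Y. -/
import Mathlib


/-- An abstract calculus of vector fields on a Riemannian manifold: `C` is the ring of smooth
functions, `X` the `C`-module of vector fields, `g` the Riemannian metric, `D` the directional
derivative, `bracket` the Lie bracket and `lc` the Levi-Civita connection `∇^g`. -/
structure VectorFieldCalculus (C X : Type*) [CommRing C] [Algebra ℝ C]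
    [AddCommGroup X] [Module C X] where
  g : X → X → C
  D : X → C → C
  bracket : X → X → X
  lc : X → X → X
  g_symm : ∀ a b, g a b = g b a
  g_add_left : ∀ a b c, g (a + b) c = g a c + g b c
  g_smul_left : ∀ (f : C) a b, g (f • a) b = f * g a b
  g_definite : ∀ a, g a a = 0 → a = 0
  D_add : ∀ v f h, D v (f + h) = D v f + D v h
  D_mul : ∀ v f h, D v (f * h) = f * D v h + h * D v f
  D_algebraMap : ∀ v (r : ℝ), D v (algebraMap ℝ C r) = 0
  D_add_vec : ∀ v w f, D (v + w) f = D v f + D w f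
  D_smul_vec : ∀ (f : C) v h, D (f • v) h = f * D v h
  bracket_antisymm : ∀ a b, bracket a b = - bracket b a
  bracket_jacobi : ∀ a b c,
    bracket (bracket a b) c + bracket (bracket b c) a + bracket (bracket c a) b = 0
  bracket_D : ∀ a b f, D (bracket a b) f = D a (D b f) - D b (D a f)
  bracket_leibniz : ∀ a (f : C) b, bracket a (f • b) = D a f • b + f • bracket a b
  lc_add : ∀ z a b, lc z (a + b) = lc z a + lc z b
  lc_smul : ∀ z (f : C) a, lc z (f • a) = D z f • a + f • lc z a
  lc_add_vec : ∀ z w a, lc (z + w) a = lc z a + lc w a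
  lc_smul_vec : ∀ (f : C) z a, lc (f • z) a = f • lc z a
  lc_metric : ∀ z a b, D z (g a b) = g (lc z a) b + g a (lc z b)
  lc_torsion_free : ∀ a b, lc a b - lc b a = bracket a b

/-- A vector field `k` is Killing iff `⟨∇_v k, w⟩ + ⟨∇_w k, v⟩ = 0` for all `v, w`. -/
def VectorFieldCalculus.IsKilling {C X : Type*} [CommRing C] [Algebra ℝ C]
    [AddCommGroup X] [Module C X] (V : VectorFieldCalculus C X) (k : X) : Prop :=
  ∀ v w, V.g (V.lc v k) w + V.g (V.lc w k) v = 0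

namespace VectorFieldCalculus

variable {C X : Type*} [CommRing C] [Algebra ℝ C] [AddCommGroup X] [Module C X]
  (V : VectorFieldCalculus C X)

lemma lc_sub (z x y : X) : V.lc z (x - y) = V.lc z x - V.lc z y :=
  map_sub (AddMonoidHom.mk' (V.lc z) (V.lc_add z)) x y

lemma lc_sub_vec (z w x : X) : V.lc (z - w) x = V.lc z x - V.lc w x :=
  map_sub (AddMonoidHom.mk' (fun z => V.lc z x) (fun a b => V.lc_add_vec a b x)) z w

lemma lc_zero_vec (x : X) : V.lc 0 x = 0 :=
  map_zero (AddMonoidHom.mk' (fun z => V.lc z x) (fun a b => V.lc_add_vec a b x))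

lemma g_zero_left (x : X) : V.g 0 x = 0 :=
  map_zero (AddMonoidHom.mk' (fun z => V.g z x) (fun a b => V.g_add_left a b x))

lemma g_sub_left (a b x : X) : V.g (a - b) x = V.g a x - V.g b x :=
  map_sub (AddMonoidHom.mk' (fun z => V.g z x) (fun a b => V.g_add_left a b x)) a b

lemma g_add_right (x a b : X) : V.g x (a + b) = V.g x a + V.g x b := by
  rw [V.g_symm x (a + b), V.g_add_left, V.g_symm a x, V.g_symm b x]

lemma g_sub_right (x a b : X) : V.g x (a - b) = V.g x a - V.g x b := by
  rw [V.g_symm x (a - b), V.g_sub_left, V.g_symm a x, V.g_symm b x]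

lemma g_smul_right (f : C) (x a : X) : V.g x (f • a) = f * V.g x a := by
  rw [V.g_symm x (f • a), V.g_smul_left, V.g_symm a x]

lemma lc_bracket (x a b : X) :
    V.lc x (V.bracket a b) = V.lc x (V.lc a b) - V.lc x (V.lc b a) := by
  rw [← V.lc_torsion_free a b, V.lc_sub]

lemma lc_bracket_vec (a b c : X) :
    V.lc (V.bracket a b) c
      = V.bracket (V.bracket a b) c + V.lc c (V.lc a b) - V.lc c (V.lc b a) := by
  have h := V.lc_torsion_free (V.bracket a b) c
  have h2 : V.lc (V.bracket a b) c = V.bracket (V.bracket a b) c + V.lc c (V.bracket a b) :=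
    eq_add_of_sub_eq h
  rw [h2, V.lc_bracket]
  abel

lemma bianchi (a b c : X) :
    (V.lc a (V.lc b c) - V.lc b (V.lc a c) - V.lc (V.bracket a b) c)
  + (V.lc b (V.lc c a) - V.lc c (V.lc b a) - V.lc (V.bracket b c) a)
  + (V.lc c (V.lc a b) - V.lc a (V.lc c b) - V.lc (V.bracket c a) b) = 0 := by
  rw [V.lc_bracket_vec a b c, V.lc_bracket_vec b c a, V.lc_bracket_vec c a b]
  have hJ : -(V.bracket (V.bracket a b) c + V.bracket (V.bracket b c) a
      + V.bracket (V.bracket c a) b) = 0 := by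
    rw [V.bracket_jacobi, neg_zero]
  rw [← hJ]
  abel


lemma g_bracket_left (a b x : X) :
    V.g (V.bracket a b) x = V.g (V.lc a b) x - V.g (V.lc b a) x := by
  rw [← V.lc_torsion_free, V.g_sub_left]

lemma main (v : X) (nab : X → X → X)
    (hnab : ∀ a b, nab a b = V.lc a b + V.g a b • v - V.g v b • a)
    (hflat : ∀ a b c, nab a (nab b c) - nab b (nab a c) - nab (V.bracket a b) c = 0)
    (a b c : X) :
    (V.g (V.lc b v) c - V.g (V.lc c v) b) • a
  + (V.g (V.lc c v) a - V.g (V.lc a v) c) • b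
  + (V.g (V.lc a v) b - V.g (V.lc b v) a) • c = 0 := by
  have hb := V.bianchi a b c
  have h1 := hflat a b c
  have h2 := hflat b c a
  have h3 := hflat c a b
  have key : (V.g (V.lc b v) c - V.g (V.lc c v) b) • a
      + (V.g (V.lc c v) a - V.g (V.lc a v) c) • b
      + (V.g (V.lc a v) b - V.g (V.lc b v) a) • c
      = ((nab a (nab b c) - nab b (nab a c) - nab (V.bracket a b) c)
        + (nab b (nab c a) - nab c (nab b a) - nab (V.bracket b c) a)
        + (nab c (nab a b) - nab a (nab c b) - nab (V.bracket c a) b))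
      - ((V.lc a (V.lc b c) - V.lc b (V.lc a c) - V.lc (V.bracket a b) c)
        + (V.lc b (V.lc c a) - V.lc c (V.lc b a) - V.lc (V.bracket b c) a)
        + (V.lc c (V.lc a b) - V.lc a (V.lc c b) - V.lc (V.bracket c a) b)) := by
    simp only [hnab, ← V.lc_torsion_free, V.lc_sub_vec, V.lc_sub, V.lc_add, V.lc_smul, V.lc_metric, V.g_sub_right, V.g_add_right,
      V.g_smul_right, V.g_sub_left, V.g_add_left, V.g_smul_left]
    simp only [V.g_symm v a, V.g_symm v b, V.g_symm v c, V.g_symm b a, V.g_symm c a,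
      V.g_symm c b]
    module
  rw [h1, h2, h3, hb] at key
  simpa using key


lemma g_sum_left' {ι : Type*} (s : Finset ι) (f : ι → X) (y : X) :
    V.g (∑ i ∈ s, f i) y = ∑ i ∈ s, V.g (f i) y :=
  map_sum (AddMonoidHom.mk' (fun z => V.g z y) (fun a b => V.g_add_left a b y)) f s

lemma g_sum_right' {ι : Type*} (s : Finset ι) (x : X) (f : ι → X) :
    V.g x (∑ i ∈ s, f i) = ∑ i ∈ s, V.g x (f i) :=
  map_sum (AddMonoidHom.mk' (fun z => V.g x z) (fun a b => V.g_add_right x a b)) f s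

lemma lc_sum_vec {ι : Type*} (s : Finset ι) (f : ι → X) (y : X) :
    V.lc (∑ i ∈ s, f i) y = ∑ i ∈ s, V.lc (f i) y :=
  map_sum (AddMonoidHom.mk' (fun z => V.lc z y) (fun a b => V.lc_add_vec a b y)) f s

end VectorFieldCalculus

/-- On `(Mⁿ,g)`, `n ≥ 3`, if the metric connection
`∇_a b = ∇^g_a b + ⟨a,b⟩v - ⟨v,b⟩a` with vectorial torsion `v` is flat, then the 1-form dual
to `v` is closed: `⟨∇^g_a v, b⟩ = ⟨∇^g_b v, a⟩` for all `a, b`. -/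
theorem vectorial_torsion_flat_closed {C X : Type*} [CommRing C] [Algebra ℝ C]
    [AddCommGroup X] [Module C X] {n : ℕ} (hn : 3 ≤ n)
    (V : VectorFieldCalculus C X) (v : X)
    (nab : X → X → X)
    (hnab : ∀ a b, nab a b = V.lc a b + V.g a b • v - V.g v b • a)
    (hflat : ∀ a b c, nab a (nab b c) - nab b (nab a c) - nab (V.bracket a b) c = 0)
    (e : Fin n → X)
    (horth : ∀ i j, V.g (e i) (e j) = if i = j then 1 else 0)
    (hspan : ∀ a, a = ∑ i, V.g a (e i) • e i) :
    ∀ a b, V.g (V.lc a v) b = V.g (V.lc b v) a := by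
  have hbasis : ∀ i j, V.g (V.lc (e i) v) (e j) = V.g (V.lc (e j) v) (e i) := by
    intro i j
    rcases eq_or_ne i j with rfl | hij
    · rfl
    · obtain ⟨k, hki, hkj⟩ : ∃ k : Fin n, k ≠ i ∧ k ≠ j := by
        by_contra h
        push_neg at h
        have hsub : (Finset.univ : Finset (Fin n)) ⊆ {i, j} := by
          intro x _
          simp only [Finset.mem_insert, Finset.mem_singleton]
          by_cases hx : x = i
          · exact Or.inl hx
          · exact Or.inr (h x hx)
        have hle := Finset.card_le_card hsub
        have h2 : ({i, j} : Finset (Fin n)).card ≤ 2 :=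
          le_trans (Finset.card_insert_le _ _) (by simp)
        simp only [Finset.card_univ, Fintype.card_fin] at hle
        omega
      have hm := V.main v nab hnab hflat (e i) (e j) (e k)
      have hg := congrArg (fun x => V.g x (e k)) hm
      simp only [V.g_add_left, V.g_smul_left, V.g_zero_left, horth,
        Ne.symm hki, Ne.symm hkj, if_false, if_true, if_neg, ite_true, ite_false,
        mul_zero, mul_one, zero_add, add_zero] at hg
      linear_combination hg
  have expand : ∀ x y : X, V.g (V.lc x v) y
      = ∑ i, ∑ j, V.g x (e i) * V.g y (e j) * V.g (V.lc (e i) v) (e j) := by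
    intro x y
    conv_lhs => rw [hspan x, hspan y]
    rw [V.lc_sum_vec]
    simp only [V.lc_smul_vec, V.g_sum_left', V.g_sum_right', V.g_smul_left, V.g_smul_right,
      Finset.mul_sum]
    exact Finset.sum_congr rfl fun i _ => Finset.sum_congr rfl fun j _ => by ring
  intro a b
  rw [expand a b, expand b a, Finset.sum_comm]
  exact Finset.sum_congr rfl fun j _ => Finset.sum_congr rfl fun i _ => by
    rw [hbasis i j]; ring
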